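/- arXiv:1812.02838 — 7 statements merged into one kernel-verified Lean document; each statement's English description precedes it below -/
import Mathlib

section
/- A bounded operator T on a complex Hilbert space H is an n-quasi-m-isometry if and only if the restriction of T to the closure of the range of T^n is an m-isometry, i.e., for all x in the closure of R(T^n), the sum over k from 0 to m of (-1)^{m-k} * binomial(m,k) * ||T^k x||^2 equals 0. -/
variable {H : Type*} [NormedAddCommGroup H] [InnerProductSpace ℂ H] [CompleteSpace H]

/-- `β_m(T) = ∑_{k=0}^m (-1)^{m-k} C(m,k) T^{*k} T^k`. -/
noncomputable def betaOp (T : H →L[ℂ] H) (m : ℕ) : H →L[ℂ] H :=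
  ∑ k ∈ Finset.range (m + 1),
    ((-1 : ℂ) ^ (m - k) * (m.choose k : ℂ)) • ((ContinuousLinearMap.adjoint T) ^ k * T ^ k)

/-- `T` is an `n`-quasi-`m`-isometry if `T^{*n} β_m(T) T^n = 0`. -/
def IsNQuasiMIsometry (T : H →L[ℂ] H) (n m : ℕ) : Prop :=
  (ContinuousLinearMap.adjoint T) ^ n * betaOp T m * T ^ n = 0

open ContinuousLinearMap in
lemma betaOp_inner (T : H →L[ℂ] H) (m : ℕ) (x : H) :
    (inner ℂ (betaOp T m x) x : ℂ) =
      ((∑ k ∈ Finset.range (m + 1),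
          (-1 : ℝ) ^ (m - k) * (m.choose k : ℝ) * ‖(T ^ k) x‖ ^ 2 : ℝ) : ℂ) := by
  rw [betaOp, ContinuousLinearMap.sum_apply, sum_inner]
  push_cast [-FunLike.coe_mul_eq_comp, -FunLike.coe_pow_eq_iterate]
  refine Finset.sum_congr rfl fun k _ => ?_
  rw [Pi.smul_apply, inner_smul_left]
  have hadj : (ContinuousLinearMap.adjoint T) ^ k = ContinuousLinearMap.adjoint (T ^ k) := by
    simp [← star_eq_adjoint, star_pow]
  rw [ContinuousLinearMap.mul_apply, hadj, adjoint_inner_left, inner_self_eq_norm_sq_to_K]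
  simp [mul_comm, mul_assoc, mul_left_comm]

theorem nQuasiMIsometry_iff_mIsometry_on_closure_range (T : H →L[ℂ] H) (m n : ℕ)
    (hm : 1 ≤ m) (hn : 1 ≤ n) :
    IsNQuasiMIsometry T n m ↔
      ∀ x ∈ closure (Set.range (T ^ n)),
        ∑ k ∈ Finset.range (m + 1),
          (-1 : ℝ) ^ (m - k) * (m.choose k : ℝ) * ‖(T ^ k) x‖ ^ 2 = 0 := by
  have hadj : (ContinuousLinearMap.adjoint T) ^ n = ContinuousLinearMap.adjoint (T ^ n) := by
    simp [← ContinuousLinearMap.star_eq_adjoint, star_pow]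
  have key : ∀ y : H, (inner ℂ (((ContinuousLinearMap.adjoint T) ^ n * betaOp T m * T ^ n) y) y : ℂ)
      = ((∑ k ∈ Finset.range (m + 1),
          (-1 : ℝ) ^ (m - k) * (m.choose k : ℝ) * ‖(T ^ k) ((T ^ n) y)‖ ^ 2 : ℝ) : ℂ) := by
    intro y
    rw [← betaOp_inner T m ((T ^ n) y)]
    simp only [ContinuousLinearMap.mul_apply, hadj]
    rw [ContinuousLinearMap.adjoint_inner_left]
  constructor
  · intro h x hx
    have hcont : Continuous fun x : H => ∑ k ∈ Finset.range (m + 1),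
        (-1 : ℝ) ^ (m - k) * (m.choose k : ℝ) * ‖(T ^ k) x‖ ^ 2 := by
      fun_prop
    have hclosed : IsClosed {x : H | ∑ k ∈ Finset.range (m + 1),
        (-1 : ℝ) ^ (m - k) * (m.choose k : ℝ) * ‖(T ^ k) x‖ ^ 2 = 0} :=
      isClosed_eq hcont continuous_const
    refine hclosed.closure_subset_iff.mpr ?_ hx
    rintro _ ⟨y, rfl⟩
    have := key y
    rw [h] at this
    simp only [ContinuousLinearMap.zero_apply, inner_zero_left] at this
    exact_mod_cast this.symm
  · intro h
    unfold IsNQuasiMIsometry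
    have hz : (((ContinuousLinearMap.adjoint T) ^ n * betaOp T m * T ^ n : H →L[ℂ] H) :
        H →ₗ[ℂ] H) = 0 := by
      rw [← inner_map_self_eq_zero]
      intro y
      rw [ContinuousLinearMap.coe_coe, key y,
        h ((T ^ n) y) (subset_closure (Set.mem_range_self y))]
      simp
    exact ContinuousLinearMap.coe_injective (hz.trans ContinuousLinearMap.coe_zero.symm)
end

section
/- If T is an n-quasi-m-isometric operator on a Hilbert space H, then T is an n-quasi-k-isometric operator for every positive integer k ≥ m. -/
variable {H : Type*} [NormedAddCommGroup H] [InnerProductSpace ℂ H] [CompleteSpace H]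

/-- The map `X ↦ T* X T` as a linear endomorphism of operators. -/
noncomputable def conjL (T : H →L[ℂ] H) : Module.End ℂ (H →L[ℂ] H) where
  toFun X := ContinuousLinearMap.adjoint T * X * T
  map_add' := by intros; simp [mul_add, add_mul]
  map_smul' := by intros; simp [mul_smul_comm, smul_mul_assoc]

lemma conjL_pow_one (T : H →L[ℂ] H) (k : ℕ) :
    (conjL T ^ k) 1 = (ContinuousLinearMap.adjoint T) ^ k * T ^ k := by
  induction k with
  | zero => simp
  | succ k ih =>
    rw [pow_succ', Module.End.mul_apply, ih]
    show ContinuousLinearMap.adjoint T * (ContinuousLinearMap.adjoint T ^ k * T ^ k) * T = _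
    rw [pow_succ' (ContinuousLinearMap.adjoint T), pow_succ T]
    simp [mul_assoc]

lemma betaOp_eq (T : H →L[ℂ] H) (m : ℕ) :
    betaOp T m = ((conjL T - 1) ^ m) 1 := by
  rw [sub_eq_add_neg, (Commute.neg_one_right (conjL T)).add_pow]
  rw [LinearMap.sum_apply]
  unfold betaOp
  refine Finset.sum_congr rfl fun i hi => ?_
  rw [Module.End.mul_apply, Module.End.mul_apply]
  simp only [Module.End.natCast_apply, map_nsmul]
  rcases Nat.even_or_odd (m - i) with h | h <;>
    simp [h.neg_one_pow, conjL_pow_one, smul_smul, mul_comm, Nat.cast_smul_eq_nsmul ℂ,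
      nsmul_eq_mul]

lemma betaOp_succ (T : H →L[ℂ] H) (m : ℕ) :
    betaOp T (m + 1) = ContinuousLinearMap.adjoint T * betaOp T m * T - betaOp T m := by
  rw [betaOp_eq, betaOp_eq, pow_succ', Module.End.mul_apply, LinearMap.sub_apply,
    Module.End.one_apply]
  rfl

lemma isNQuasiMIsometry_step (T : H →L[ℂ] H) (n m : ℕ) (hT : IsNQuasiMIsometry T n m) :
    IsNQuasiMIsometry T n (m + 1) := by
  unfold IsNQuasiMIsometry at *
  rw [betaOp_succ, mul_sub, sub_mul, hT, sub_zero]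
  have key : ContinuousLinearMap.adjoint T ^ n *
        (ContinuousLinearMap.adjoint T * betaOp T m * T) * T ^ n
      = ContinuousLinearMap.adjoint T *
        (ContinuousLinearMap.adjoint T ^ n * betaOp T m * T ^ n) * T := by
    simp only [mul_assoc]
    rw [← mul_assoc (ContinuousLinearMap.adjoint T ^ n), ← pow_succ, pow_succ']
    rw [show T * T ^ n = T ^ n * T from by rw [← pow_succ', pow_succ]]
    simp [mul_assoc]
  rw [key, hT, mul_zero, zero_mul]

theorem nQuasiMIsometry_of_le (T : H →L[ℂ] H) (m n k : ℕ) (hm : 1 ≤ m) (hn : 1 ≤ n)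
    (hk : m ≤ k) (hT : IsNQuasiMIsometry T n m) : IsNQuasiMIsometry T n k := by
  induction k, hk using Nat.le_induction with
  | base => exact hT
  | succ k hk ih => exact isNQuasiMIsometry_step T n k ih
end

section
/- Let T be an n-quasi-m-isometric operator with n ≥ 2. If the kernel of T^* equals the kernel of T^{*2}, then T is a quasi-m-isometry (i.e., a 1-quasi-m-isometry). -/
variable {H : Type*} [NormedAddCommGroup H] [InnerProductSpace ℂ H] [CompleteSpace H]

lemma adjoint_pow' (T : H →L[ℂ] H) (k : ℕ) :
    ContinuousLinearMap.adjoint (T ^ k) = (ContinuousLinearMap.adjoint T) ^ k := by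
  induction k with
  | zero =>
      rw [pow_zero, pow_zero, show (1 : H →L[ℂ] H) = ContinuousLinearMap.id ℂ H from rfl,
        ContinuousLinearMap.adjoint_id]
  | succ k ih =>
    rw [pow_succ, pow_succ']
    rw [show T ^ k * T = (T ^ k) ∘L T from rfl, ContinuousLinearMap.adjoint_comp, ih]
    rfl

lemma betaOp_adjoint (T : H →L[ℂ] H) (m : ℕ) :
    ContinuousLinearMap.adjoint (betaOp T m) = betaOp T m := by
  unfold betaOp
  rw [map_sum]
  refine Finset.sum_congr rfl fun k _ => ?_
  rw [ContinuousLinearMap.adjoint.map_smulₛₗ,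
    show ContinuousLinearMap.adjoint ((ContinuousLinearMap.adjoint T) ^ k * T ^ k) =
      (ContinuousLinearMap.adjoint T) ^ k * T ^ k by
        rw [show (ContinuousLinearMap.adjoint T) ^ k * T ^ k =
          ((ContinuousLinearMap.adjoint T) ^ k) ∘L (T ^ k) from rfl,
          ContinuousLinearMap.adjoint_comp, adjoint_pow', adjoint_pow',
          ContinuousLinearMap.adjoint_adjoint]]
  congr 1
  simp [map_mul, map_pow]

lemma ker_pow_eq (A : H →L[ℂ] H) (h : LinearMap.ker (A : H →ₗ[ℂ] H) =
      LinearMap.ker ((A ^ 2 : H →L[ℂ] H) : H →ₗ[ℂ] H))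
    (k : ℕ) (hk : 1 ≤ k) : LinearMap.ker ((A ^ k : H →L[ℂ] H) : H →ₗ[ℂ] H) =
      LinearMap.ker (A : H →ₗ[ℂ] H) := by
  induction k with
  | zero => omega
  | succ k ih =>
    rcases Nat.eq_or_lt_of_le hk with h1 | h1
    · simp [← h1, pow_one]
    have ih' := ih (by omega)
    ext x
    simp only [LinearMap.mem_ker, ContinuousLinearMap.coe_coe]
    constructor
    · intro hx
      have h1 : (A ^ (k + 1)) x = (A ^ k) (A x) := by
        rw [pow_succ]; rfl
      have h2 : A x ∈ LinearMap.ker ((A ^ k : H →L[ℂ] H) : H →ₗ[ℂ] H) := by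
        rw [LinearMap.mem_ker, ContinuousLinearMap.coe_coe, ← h1]; exact hx
      rw [ih'] at h2
      have h3 : x ∈ LinearMap.ker ((A ^ 2 : H →L[ℂ] H) : H →ₗ[ℂ] H) := by
        simp only [LinearMap.mem_ker, ContinuousLinearMap.coe_coe]
        rw [pow_two]
        exact h2
      rw [← h] at h3
      exact h3
    · intro hx
      rw [pow_succ]
      show (A ^ k) (A x) = 0
      rw [hx]; simp

theorem quasiMIsometry_of_ker_adjoint_eq (T : H →L[ℂ] H) (m n : ℕ) (hm : 1 ≤ m) (hn : 2 ≤ n)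
    (hT : IsNQuasiMIsometry T n m)
    (hker : LinearMap.ker ((ContinuousLinearMap.adjoint T : H →L[ℂ] H) : H →ₗ[ℂ] H) =
      LinearMap.ker (((ContinuousLinearMap.adjoint T) ^ 2 : H →L[ℂ] H) : H →ₗ[ℂ] H)) :
    IsNQuasiMIsometry T 1 m := by
  set A := ContinuousLinearMap.adjoint T with hA
  have hkerpow : ∀ k, 1 ≤ k → LinearMap.ker ((A ^ k : H →L[ℂ] H) : H →ₗ[ℂ] H) =
      LinearMap.ker (A : H →ₗ[ℂ] H) :=
    fun k hk => ker_pow_eq A hker k hk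
  -- Step 1: A * β * T^n = 0
  have step1 : A * betaOp T m * T ^ n = 0 := by
    ext x
    have hx : (A ^ n) ((betaOp T m) ((T ^ n) x)) = 0 := by
      have := congrFun (congrArg DFunLike.coe hT) x
      simpa using this
    have hmem : (betaOp T m) ((T ^ n) x) ∈ LinearMap.ker ((A ^ n : H →L[ℂ] H) : H →ₗ[ℂ] H) := hx
    rw [hkerpow n (by omega)] at hmem
    simpa using hmem
  -- Step 2: take adjoint: A^n * β * T = 0
  have step2 : A ^ n * betaOp T m * T = 0 := by
    have := congrArg ContinuousLinearMap.adjoint step1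
    rw [show A * betaOp T m * T ^ n = A ∘L (betaOp T m ∘L T ^ n) from rfl] at this
    rw [ContinuousLinearMap.adjoint_comp, ContinuousLinearMap.adjoint_comp] at this
    rw [adjoint_pow', betaOp_adjoint, ← hA, ContinuousLinearMap.adjoint_adjoint] at this
    simp only [map_zero] at this
    exact this
  -- Step 3: same argument again
  have step3 : A * betaOp T m * T = 0 := by
    ext x
    have hx : (A ^ n) ((betaOp T m) (T x)) = 0 := by
      have := congrFun (congrArg DFunLike.coe step2) x
      simpa using this
    have hmem : (betaOp T m) (T x) ∈ LinearMap.ker ((A ^ n : H →L[ℂ] H) : H →ₗ[ℂ] H) := hx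
    rw [hkerpow n (by omega)] at hmem
    simpa using hmem
  unfold IsNQuasiMIsometry
  simpa using step3
end

section
/- If T is an n-quasi-m-isometric operator, then T^k is an n-quasi-m-isometric operator for every positive integer k. -/
open Finset fwdDiff

section auxdiff

variable {G : Type*} [AddCommGroup G]

private lemma fwdDiff_comm' (a b : ℕ) (f : ℕ → G) :
    (fwdDiff a) ((fwdDiff b) f) = (fwdDiff b) ((fwdDiff a) f) := by
  funext t
  simp only [fwdDiff]
  have : t + a + b = t + b + a := by omega
  rw [this]
  abel

private lemma fwdDiff_iter_comm (a b m : ℕ) (f : ℕ → G) :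
    (fwdDiff a)^[m] ((fwdDiff b) f) = (fwdDiff b) ((fwdDiff a)^[m] f) := by
  induction m generalizing f with
  | zero => simp
  | succ m ih =>
    rw [Function.iterate_succ_apply, Function.iterate_succ_apply, fwdDiff_comm', ih]

private lemma eventually_const (n : ℕ) (g : ℕ → G) (hg : ∀ t, n ≤ t → (fwdDiff 1) g t = 0) :
    ∀ t, n ≤ t → ∀ i, g (t + i) = g t := by
  intro t ht i
  induction i with
  | zero => rfl
  | succ i ih =>
    have h := hg (t + i) (le_trans ht (Nat.le_add_right _ _))
    have h' : g (t + i + 1) = g (t + i) := by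
      have := sub_eq_zero.mp h
      simpa [fwdDiff] using this
    rw [← Nat.add_assoc, h', ih]

private lemma step_diff (n K : ℕ) :
    ∀ (m : ℕ) (f : ℕ → G), (∀ t, n ≤ t → (fwdDiff 1)^[m] f t = 0) →
      ∀ a, n ≤ a → (fwdDiff K)^[m] f a = 0 := by
  intro m
  induction m with
  | zero => intro f hf a ha; exact hf a ha
  | succ m ih =>
    intro f hf a ha
    rw [Function.iterate_succ_apply]
    refine ih ((fwdDiff K) f) ?_ a ha
    intro t ht
    rw [fwdDiff_iter_comm]
    have hconst : ∀ s, n ≤ s → ∀ i, ((fwdDiff 1)^[m] f) (s + i) = ((fwdDiff 1)^[m] f) s := by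
      refine eventually_const n _ ?_
      intro s hs
      have := hf s hs
      rwa [Function.iterate_succ_apply'] at this
    show ((fwdDiff 1)^[m] f) (t + K) - ((fwdDiff 1)^[m] f) t = 0
    rw [hconst t ht K, sub_self]

end auxdiff

variable {H : Type*} [NormedAddCommGroup H] [InnerProductSpace ℂ H] [CompleteSpace H]

private lemma beta_conj (T : H →L[ℂ] H) (n m : ℕ) :
    (ContinuousLinearMap.adjoint T) ^ n * betaOp T m * T ^ n =
      ∑ j ∈ Finset.range (m + 1), ((-1 : ℂ) ^ (m - j) * (m.choose j : ℂ)) •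
        ((ContinuousLinearMap.adjoint T) ^ (n + j) * T ^ (n + j)) := by
  unfold betaOp
  rw [Finset.mul_sum, Finset.sum_mul]
  refine Finset.sum_congr rfl fun j _ => ?_
  rw [mul_smul_comm, smul_mul_assoc]
  congr 1
  simp only [pow_add, mul_assoc]
  congr 1
  rw [← mul_assoc, pow_mul_comm]
  rw [mul_assoc]

private lemma int_smul_coe (e c : ℕ) (x : H →L[ℂ] H) :
    ((-1 : ℤ) ^ e * (c : ℤ)) • x = ((-1 : ℂ) ^ e * (c : ℂ)) • x := by
  rw [← Int.cast_smul_eq_zsmul ℂ]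
  push_cast
  ring_nf

theorem nQuasiMIsometry_pow (T : H →L[ℂ] H) (m n : ℕ) (hm : 1 ≤ m) (hn : 1 ≤ n)
    (hT : IsNQuasiMIsometry T n m) :
    ∀ k : ℕ, 1 ≤ k → IsNQuasiMIsometry (T ^ k) n m := by
  intro k hk
  set S := ContinuousLinearMap.adjoint T with hS
  set f : ℕ → (H →L[ℂ] H) := fun s => S ^ s * T ^ s with hf
  -- iterated forward differences of f as explicit sums
  have hiter : ∀ (t : ℕ) (K : ℕ), (fwdDiff K)^[m] f t =
      ∑ j ∈ Finset.range (m + 1), ((-1 : ℂ) ^ (m - j) * (m.choose j : ℂ)) • f (t + j * K) := by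
    intro t K
    rw [fwdDiff_iter_eq_sum_shift]
    refine Finset.sum_congr rfl fun j _ => ?_
    rw [int_smul_coe, smul_eq_mul]
  -- hypothesis in difference form
  have hbase : (fwdDiff 1)^[m] f n = 0 := by
    rw [hiter]
    have := hT
    unfold IsNQuasiMIsometry at this
    rw [beta_conj] at this
    simpa [hf, Nat.mul_one] using this
  -- conjugation step
  have hconj : ∀ t, S * f t * T = f (t + 1) := by
    intro t
    simp only [hf]
    rw [pow_succ' S, pow_succ T]
    simp only [mul_assoc]
  have hstep : ∀ t, S * ((fwdDiff 1)^[m] f t) * T = (fwdDiff 1)^[m] f (t + 1) := by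
    intro t
    rw [hiter, hiter, Finset.mul_sum, Finset.sum_mul]
    refine Finset.sum_congr rfl fun j _ => ?_
    rw [mul_smul_comm, smul_mul_assoc, hconj]
    congr 2
    omega
  -- vanishing for all t ≥ n
  have hall : ∀ t, n ≤ t → (fwdDiff 1)^[m] f t = 0 := by
    intro t ht
    obtain ⟨i, rfl⟩ := Nat.exists_eq_add_of_le ht
    induction i with
    | zero => simpa using hbase
    | succ i ih =>
      have := hstep (n + i)
      rw [ih (Nat.le_add_right _ _)] at this
      rw [← Nat.add_assoc, ← this, mul_zero, zero_mul]
  -- vanishing for step-k differences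
  have hK : (fwdDiff k)^[m] f (k * n) = 0 :=
    step_diff n k m f hall (k * n) (Nat.le_mul_of_pos_left n hk)
  -- translate the goal
  unfold IsNQuasiMIsometry
  have hadj : ContinuousLinearMap.adjoint (T ^ k) = S ^ k := by
    rw [hS, ← ContinuousLinearMap.star_eq_adjoint, ← ContinuousLinearMap.star_eq_adjoint,
      star_pow]
  rw [beta_conj, hadj]
  rw [hiter] at hK
  rw [← hK]
  refine Finset.sum_congr rfl fun j _ => ?_
  congr 1
  rw [← pow_mul, ← pow_mul, hf]
  congr 2 <;> ring
end

section
/- If T is a power bounded n-quasi-m-isometric operator (i.e., sup_k ||T^k|| < ∞), then T is an n-quasi-isometry, i.e., T^{*n}(T^*T - I)T^n = 0. -/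
open Finset Function ContinuousLinearMap
open scoped InnerProductSpace fwdDiff

/-- A bounded real sequence whose `m`-th forward difference vanishes everywhere is constant. -/
lemma seq_const_of_fwdDiff_iter_zero (m : ℕ) (b : ℕ → ℝ) (M : ℝ)
    (hb : ∀ k, |b k| ≤ M) (hΔ : ∀ j, (fwdDiff 1)^[m] b j = 0) :
    ∀ k, b (k + 1) = b k := by
  induction m generalizing b M with
  | zero =>
    intro k
    have h0 := hΔ k
    have h1 := hΔ (k + 1)
    simp only [Function.iterate_zero, id_eq] at h0 h1
    rw [h0, h1]
  | succ m ih =>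
    set c : ℕ → ℝ := Δ_[1] b with hc
    have hcb : ∀ k, |c k| ≤ 2 * M := by
      intro k
      have := abs_sub (b (k + 1)) (b k)
      calc |c k| = |b (k + 1) - b k| := rfl
        _ ≤ |b (k + 1)| + |b k| := abs_sub _ _
        _ ≤ M + M := add_le_add (hb _) (hb _)
        _ = 2 * M := by ring
    have hΔc : ∀ j, (fwdDiff 1)^[m] c j = 0 := by
      intro j
      have := hΔ j
      rwa [Function.iterate_succ_apply] at this
    have hcconst := ih c (2 * M) hcb hΔc
    have hc0 : ∀ k, c k = c 0 := by
      intro k; induction k with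
      | zero => rfl
      | succ k ihk => rw [hcconst k, ihk]
    have hbk : ∀ k : ℕ, b k = b 0 + k * c 0 := by
      intro k; induction k with
      | zero => simp
      | succ k ihk =>
        have : b (k + 1) = b k + c k := by
          simp only [hc, fwdDiff]; ring
        rw [this, ihk, hc0 k]; push_cast; ring
    have hc00 : c 0 = 0 := by
      by_contra h
      obtain ⟨k, hk⟩ := exists_nat_gt ((M + |b 0|) / |c 0|)
      have hpos : (0 : ℝ) < |c 0| := abs_pos.mpr h
      have h1 : M + |b 0| < k * |c 0| := by
        rwa [div_lt_iff₀ hpos] at hk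
      have h2 : |(k : ℝ) * c 0| ≤ |b k| + |b 0| := by
        have : (k : ℝ) * c 0 = b k - b 0 := by rw [hbk k]; ring
        rw [this]; exact abs_sub _ _
      have h3 : |b k| + |b 0| ≤ M + |b 0| := by
        have := hb k; linarith
      rw [abs_mul, abs_of_nonneg (Nat.cast_nonneg k : (0:ℝ) ≤ k)] at h2
      linarith
    intro k
    have : b (k + 1) = b k + c k := by simp only [hc, fwdDiff]; ring
    rw [this, hc0 k, hc00, add_zero]

variable {H : Type*} [NormedAddCommGroup H] [InnerProductSpace ℂ H] [CompleteSpace H]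

theorem nQuasiIsometry_of_powerBounded (T : H →L[ℂ] H) (m n : ℕ) (hm : 1 ≤ m) (hn : 1 ≤ n)
    (hT : IsNQuasiMIsometry T n m)
    (C : ℝ) (hC : 0 < C) (hpb : ∀ (k : ℕ) (x : H), ‖(T ^ k) x‖ ≤ C * ‖x‖) :
    (ContinuousLinearMap.adjoint T) ^ n * (ContinuousLinearMap.adjoint T * T - 1) * T ^ n = 0 := by
  -- adjoint of power
  have hadj : ∀ k : ℕ, (ContinuousLinearMap.adjoint T) ^ k = ContinuousLinearMap.adjoint (T ^ k) := by
    intro k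
    rw [← star_eq_adjoint, ← star_eq_adjoint, ← star_pow]
  -- key: norms are eventually constant
  have key : ∀ x : H, ‖(T ^ (n + 1)) x‖ ^ 2 = ‖(T ^ n) x‖ ^ 2 := by
    intro x
    set b : ℕ → ℝ := fun j => ‖(T ^ (n + j)) x‖ ^ 2 with hbdef
    have hb : ∀ k, |b k| ≤ (C * ‖x‖) ^ 2 := by
      intro k
      have h1 : 0 ≤ b k := by positivity
      rw [abs_of_nonneg h1]
      have h3 := hpb (n + k) x
      have h2 : 0 ≤ ‖(T ^ (n + k)) x‖ := norm_nonneg _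
      have : b k = ‖(T ^ (n + k)) x‖ ^ 2 := rfl
      rw [this]
      nlinarith
    -- the m-th forward difference of b vanishes
    have hΔ : ∀ j, (fwdDiff 1)^[m] b j = 0 := by
      intro j
      rw [fwdDiff_iter_eq_sum_shift]
      have h0 : ((ContinuousLinearMap.adjoint T) ^ n * betaOp T m * T ^ n) ((T ^ j) x) = 0 := by
        rw [hT]; rfl
      have h1 : (0 : ℂ) = ⟪((ContinuousLinearMap.adjoint T) ^ n * betaOp T m * T ^ n)
          ((T ^ j) x), (T ^ j) x⟫_ℂ := by rw [h0, inner_zero_left]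
      set y : H := (T ^ (n + j)) x with hy
      have hyeq : (T ^ n) ((T ^ j) x) = y := by
        rw [hy, ← ContinuousLinearMap.mul_apply, ← pow_add]
      have h2 : (0 : ℂ) = ⟪betaOp T m y, y⟫_ℂ := by
        rw [h1, ContinuousLinearMap.mul_apply, ContinuousLinearMap.mul_apply, hyeq,
          hadj n, ContinuousLinearMap.adjoint_inner_left, hyeq]
      have h3 : ⟪betaOp T m y, y⟫_ℂ =
          ∑ k ∈ Finset.range (m + 1),
            ((-1 : ℂ) ^ (m - k) * (m.choose k : ℂ)) * ((‖(T ^ k) y‖ : ℂ) ^ 2) := by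
        simp only [betaOp, ContinuousLinearMap.sum_apply, sum_inner,
          ContinuousLinearMap.smul_apply, inner_smul_left, ContinuousLinearMap.mul_apply]
        refine Finset.sum_congr rfl fun k _ => ?_
        rw [hadj k, ContinuousLinearMap.adjoint_inner_left,
          inner_self_eq_norm_sq_to_K]
        push_cast
        ring_nf
        simp [mul_comm, mul_assoc, mul_left_comm]
      have h4 : ∑ k ∈ Finset.range (m + 1),
          ((-1 : ℝ) ^ (m - k) * (m.choose k : ℝ)) * (‖(T ^ k) y‖ ^ 2) = 0 := by
        have hc := (h2.trans h3).symm
        exact_mod_cast hc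
      -- identify with the fwdDiff sum
      rw [← h4]
      refine Finset.sum_congr rfl fun k hk => ?_
      have hTk : (T ^ k) y = (T ^ (n + (j + k • 1))) x := by
        have he : n + (j + k • 1) = k + (n + j) := by simp only [smul_eq_mul]; omega
        rw [hy, ← ContinuousLinearMap.mul_apply, ← pow_add, he]
      rw [zsmul_eq_mul]
      push_cast
      rw [hbdef]
      simp only [← hTk]
      exact congrArg (fun z => (-1 : ℝ) ^ (m - k) * (m.choose k : ℝ) * ‖z‖ ^ 2)
        (congrFun (hom_coe_pow (fun f : H →L[ℂ] H => ⇑f) rfl (fun _ _ => rfl) T k) y)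
    have := seq_const_of_fwdDiff_iter_zero m b ((C * ‖x‖) ^ 2) hb hΔ 0
    simpa [hbdef] using this
  -- conclude via inner products
  set S : H →L[ℂ] H :=
    (ContinuousLinearMap.adjoint T) ^ n * (ContinuousLinearMap.adjoint T * T - 1) * T ^ n with hS
  have hinner : ∀ x : H, ⟪(S : H →ₗ[ℂ] H) x, x⟫_ℂ = 0 := by
    intro x
    have : ⟪S x, x⟫_ℂ = 0 := by
      rw [hS]
      simp only [ContinuousLinearMap.mul_apply]
      rw [hadj n, ContinuousLinearMap.adjoint_inner_left]
      simp only [ContinuousLinearMap.sub_apply, ContinuousLinearMap.mul_apply,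
        ContinuousLinearMap.one_apply, inner_sub_left]
      rw [← star_eq_adjoint, ContinuousLinearMap.star_eq_adjoint,
        ContinuousLinearMap.adjoint_inner_left]
      rw [inner_self_eq_norm_sq_to_K, inner_self_eq_norm_sq_to_K]
      have hT1 : T ((T ^ n) x) = (T ^ (n + 1)) x := by
        rw [pow_succ', ContinuousLinearMap.mul_apply]
      rw [hT1]
      rw [sub_eq_zero]
      exact_mod_cast congrArg (fun r : ℝ => (r : ℂ)) (key x)
    exact this
  have hS0 : (S : H →ₗ[ℂ] H) = 0 := (inner_map_self_eq_zero _).mp hinner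
  have : S = 0 := by
    ext x
    have := LinearMap.congr_fun hS0 x
    simpa using this
  exact this
end

section
/- Let T and S be doubly commuting bounded operators on a Hilbert space (TS = ST and T^*S = ST^*). If T is an n1-quasi-m-isometry and S is an n2-quasi-l-isometry, then TS is an n0-quasi-(m+l-1)-isometry, where n0 = max(n1, n2). -/
variable {H : Type*} [NormedAddCommGroup H] [InnerProductSpace ℂ H] [CompleteSpace H]

open Finset Function
open scoped fwdDiff

section LeibnizAux

variable {R : Type*} [Ring R]

lemma fwdDiff_shift (g : ℕ → R) (j y : ℕ) :
    (Δ_[1])^[j] (fun x => g (x + 1)) y = (Δ_[1])^[j] g (y + 1) := by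
  induction j generalizing y with
  | zero => simp
  | succ j ih =>
      rw [Function.iterate_succ_apply', Function.iterate_succ_apply']
      simp only [fwdDiff, ih]

lemma fwdDiff_mul (f g : ℕ → R) :
    Δ_[1] (fun x => f x * g x) =
      (fun x => Δ_[1] f x * g x) + fun x => f (x + 1) * Δ_[1] g x := by
  funext y
  simp only [fwdDiff, Pi.add_apply]
  noncomm_ring

/-- Discrete Leibniz rule for iterated forward differences. -/
lemma fwdDiff_iter_mul (N : ℕ) :
    ∀ (f g : ℕ → R) (y : ℕ),
      (Δ_[1])^[N] (fun x => f x * g x) y =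
        ∑ j ∈ range (N + 1), N.choose j • ((Δ_[1])^[N - j] f (y + j) * (Δ_[1])^[j] g y) := by
  induction N with
  | zero => intro f g y; simp
  | succ N ih =>
      intro f g y
      rw [Function.iterate_succ_apply, fwdDiff_mul, fwdDiff_iter_add]
      rw [Pi.add_apply, ih (Δ_[1] f) g y, ih (fun x => f (x + 1)) (Δ_[1] g) y]
      set W : ℕ → R := fun j => (Δ_[1])^[N + 1 - j] f (y + j) * (Δ_[1])^[j] g y with hW
      have h1 : ∑ j ∈ range (N + 1), N.choose j • ((Δ_[1])^[N - j] (Δ_[1] f) (y + j) * (Δ_[1])^[j] g y)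
          = ∑ j ∈ range (N + 1), N.choose j • W j := by
        refine Finset.sum_congr rfl fun j hj => ?_
        have hj' : j ≤ N := by simpa using Nat.lt_succ_iff.mp (Finset.mem_range.mp hj)
        have e : N + 1 - j = (N - j) + 1 := by omega
        rw [hW]; simp only [e, Function.iterate_succ_apply]
      have h2 : ∑ j ∈ range (N + 1),
            N.choose j • ((Δ_[1])^[N - j] (fun x => f (x + 1)) (y + j) * (Δ_[1])^[j] (Δ_[1] g) y)
          = ∑ j ∈ range (N + 1), N.choose j • W (j + 1) := by
        refine Finset.sum_congr rfl fun j hj => ?_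
        have hj' : j ≤ N := by simpa using Nat.lt_succ_iff.mp (Finset.mem_range.mp hj)
        have e1 : N + 1 - (j + 1) = N - j := by omega
        rw [hW]; simp only [e1, fwdDiff_shift, ← Function.iterate_succ_apply]
        rw [show y + (j + 1) = y + j + 1 by omega]
      rw [h1, h2]
      have expand : ∑ j ∈ range (N + 2), (N + 1).choose j • W j
          = ∑ j ∈ range (N + 1), N.choose j • W j + ∑ j ∈ range (N + 1), N.choose j • W (j + 1) := by
        rw [Finset.sum_range_succ' (fun j => (N + 1).choose j • W j) (N + 1)]
        have hps : ∀ j, (N + 1).choose (j + 1) • W (j + 1)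
            = N.choose j • W (j + 1) + N.choose (j + 1) • W (j + 1) := by
          intro j; rw [Nat.choose_succ_succ', add_smul]
        simp only [hps, Finset.sum_add_distrib]
        have aux : ∑ j ∈ range (N + 1), N.choose (j + 1) • W (j + 1) + (N + 1).choose 0 • W 0
            = ∑ j ∈ range (N + 1), N.choose j • W j := by
          rw [show (N + 1).choose 0 = N.choose 0 by simp]
          rw [← Finset.sum_range_succ' (fun j => N.choose j • W j) (N + 1)]
          rw [Finset.sum_range_succ]
          simp [Nat.choose_succ_self]
        rw [add_assoc, aux]
        exact add_comm _ _
      rw [expand]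

end LeibnizAux

section OpAux

/-- `Fop T k = T^{*k} T^k`. -/
noncomputable def Fop (T : H →L[ℂ] H) : ℕ → (H →L[ℂ] H) :=
  fun k => (ContinuousLinearMap.adjoint T) ^ k * T ^ k

lemma fd_eq_beta (T : H →L[ℂ] H) (j y : ℕ) :
    (Δ_[1])^[j] (Fop T) y =
      (ContinuousLinearMap.adjoint T) ^ y * betaOp T j * T ^ y := by
  rw [fwdDiff_iter_eq_sum_shift, betaOp, Finset.mul_sum, Finset.sum_mul]
  refine Finset.sum_congr rfl fun k _ => ?_
  have h1 : y + k • 1 = y + k := by simp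
  rw [h1]
  set A := ContinuousLinearMap.adjoint T with hA
  have h2 : Fop T (y + k) = A ^ y * (A ^ k * T ^ k) * T ^ y := by
    have e1 : A ^ (y + k) = A ^ y * A ^ k := pow_add A y k
    have e2 : T ^ (y + k) = T ^ k * T ^ y := by rw [add_comm, pow_add]
    rw [Fop]
    show A ^ (y + k) * T ^ (y + k) = _
    rw [e1, e2]
    noncomm_ring
  rw [h2, mul_smul_comm, smul_mul_assoc]
  rw [← Int.cast_smul_eq_zsmul ℂ]
  congr 1
  push_cast
  ring

lemma vanish {T : H →L[ℂ] H} {n m : ℕ} (hT : IsNQuasiMIsometry T n m)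
    (p q : ℕ) (hp : m ≤ p) (hq : n ≤ q) : (Δ_[1])^[p] (Fop T) q = 0 := by
  set A := ContinuousLinearMap.adjoint T with hA
  have base : ∀ q', n ≤ q' → (Δ_[1])^[m] (Fop T) q' = 0 := by
    intro q' h
    obtain ⟨b, rfl⟩ := Nat.exists_eq_add_of_le h
    rw [fd_eq_beta]
    have e1 : A ^ (n + b) = A ^ b * A ^ n := by rw [add_comm, pow_add]
    have e2 : T ^ (n + b) = T ^ n * T ^ b := pow_add T n b
    rw [← hA, e1, e2]
    have h0 : A ^ n * betaOp T m * T ^ n = 0 := hT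
    calc A ^ b * A ^ n * betaOp T m * (T ^ n * T ^ b)
        = A ^ b * (A ^ n * betaOp T m * T ^ n) * T ^ b := by noncomm_ring
      _ = 0 := by rw [h0]; simp
  obtain ⟨a, rfl⟩ := Nat.exists_eq_add_of_le hp
  rw [add_comm, Function.iterate_add_apply, fwdDiff_iter_eq_sum_shift]
  refine Finset.sum_eq_zero fun k _ => ?_
  rw [show q + k • 1 = q + k by simp, base (q + k) (le_trans hq (Nat.le_add_right _ _))]
  simp

lemma Fop_mul {T S : H →L[ℂ] H}
    (hc : T * S = S * T)
    (hc' : ContinuousLinearMap.adjoint T * S = S * ContinuousLinearMap.adjoint T) :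
    Fop (T * S) = fun k => Fop T k * Fop S k := by
  set A := ContinuousLinearMap.adjoint T with hA
  set B := ContinuousLinearMap.adjoint S with hB
  have hadj : ContinuousLinearMap.adjoint (T * S) = B * A := by
    rw [hA, hB, ContinuousLinearMap.mul_def T S, ContinuousLinearMap.adjoint_comp,
      ← ContinuousLinearMap.mul_def]
  have cTS : Commute T S := hc
  have cBA : Commute B A := by
    have := congrArg ContinuousLinearMap.adjoint hc
    rw [ContinuousLinearMap.mul_def, ContinuousLinearMap.mul_def,
      ContinuousLinearMap.adjoint_comp, ContinuousLinearMap.adjoint_comp] at this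
    rw [← ContinuousLinearMap.mul_def, ← ContinuousLinearMap.mul_def] at this
    exact this
  have cBT : Commute B T := by
    have := congrArg ContinuousLinearMap.adjoint hc'
    rw [ContinuousLinearMap.mul_def, ContinuousLinearMap.mul_def,
      ContinuousLinearMap.adjoint_comp, ContinuousLinearMap.adjoint_comp,
      ContinuousLinearMap.adjoint_adjoint] at this
    rw [← ContinuousLinearMap.mul_def, ← ContinuousLinearMap.mul_def] at this
    exact this
  funext k
  have e1 : (T * S) ^ k = T ^ k * S ^ k := cTS.mul_pow k
  have e2 : (B * A) ^ k = B ^ k * A ^ k := cBA.mul_pow k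
  have cmid : Commute (B ^ k) (A ^ k * T ^ k) :=
    (cBA.pow_pow k k).mul_right (cBT.pow_pow k k)
  show ContinuousLinearMap.adjoint (T * S) ^ k * (T * S) ^ k = (A ^ k * T ^ k) * (B ^ k * S ^ k)
  rw [hadj, e1, e2]
  calc B ^ k * A ^ k * (T ^ k * S ^ k)
      = (B ^ k * (A ^ k * T ^ k)) * S ^ k := by noncomm_ring
    _ = ((A ^ k * T ^ k) * B ^ k) * S ^ k := by rw [cmid.eq]
    _ = (A ^ k * T ^ k) * (B ^ k * S ^ k) := by noncomm_ring

end OpAux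

theorem product_doubly_commuting_nQuasiMIsometry (T S : H →L[ℂ] H) (m l n₁ n₂ : ℕ)
    (hm : 1 ≤ m) (hl : 1 ≤ l) (hn₁ : 1 ≤ n₁) (hn₂ : 1 ≤ n₂)
    (hc : T * S = S * T) (hc' : ContinuousLinearMap.adjoint T * S = S * ContinuousLinearMap.adjoint T)
    (hT : IsNQuasiMIsometry T n₁ m) (hS : IsNQuasiMIsometry S n₂ l) :
    IsNQuasiMIsometry (T * S) (max n₁ n₂) (m + l - 1) := by
  set N := m + l - 1 with hN
  set n := max n₁ n₂ with hn
  show ContinuousLinearMap.adjoint (T * S) ^ n * betaOp (T * S) N * (T * S) ^ n = 0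
  rw [← fd_eq_beta (T * S) N n, Fop_mul hc hc']
  rw [fwdDiff_iter_mul N (Fop T) (Fop S) n]
  refine Finset.sum_eq_zero fun j hj => ?_
  rcases lt_or_ge j l with h | h
  · have hz : (Δ_[1])^[N - j] (Fop T) (n + j) = 0 :=
      vanish hT (N - j) (n + j) (by omega) (le_trans (le_max_left _ _) (Nat.le_add_right _ _))
    rw [hz, zero_mul, smul_zero]
  · have hz : (Δ_[1])^[j] (Fop S) n = 0 :=
      vanish hS j n h (le_max_right _ _)
    rw [hz, mul_zero, smul_zero]
end

section
/- Let T and S be doubly commuting operators such that T is an n1-quasi-m-isometry and S is an n2-quasi-l-isometry. Then for all positive integers p and q, T^p S^q is a max(n1,n2)-quasi-(m+l-1)-isometry. -/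
variable {H : Type*} [NormedAddCommGroup H] [InnerProductSpace ℂ H] [CompleteSpace H]

/-- The key commutative-ring lemma: the quasi-isometry defect of the product is a combination
of the two individual defects. -/
lemma aux_key {A : Type*} [CommRing A] (u v : A) {m l n₁ n₂ p q N : ℕ}
    (hl : 1 ≤ l) (hp : 1 ≤ p) (hq : 1 ≤ q) (h1 : n₁ ≤ N) (h2 : n₂ ≤ N) :
    ∃ c d : A, (u ^ p * v ^ q) ^ N * (u ^ p * v ^ q - 1) ^ (m + l - 1) =
      c * (u ^ n₁ * (u - 1) ^ m) + d * (v ^ n₂ * (v - 1) ^ l) := by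
  have hmem : (u ^ p * v ^ q) ^ N * (u ^ p * v ^ q - 1) ^ (m + l - 1) ∈
      Ideal.span {u ^ n₁ * (u - 1) ^ m, v ^ n₂ * (v - 1) ^ l} := by
    have hw : u ^ p * v ^ q - 1 = v ^ q * (u ^ p - 1) + (v ^ q - 1) := by ring
    rw [hw, add_pow, Finset.mul_sum]
    refine Ideal.sum_mem _ fun j hj => ?_
    simp only [Finset.mem_range] at hj
    have hdu : (u - 1) ∣ u ^ p - 1 := by simpa using sub_dvd_pow_sub_pow u 1 p
    have hdv : (v - 1) ∣ v ^ q - 1 := by simpa using sub_dvd_pow_sub_pow v 1 q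
    by_cases hjm : m ≤ j
    · have hdvd : u ^ n₁ * (u - 1) ^ m ∣
          (u ^ p * v ^ q) ^ N * ((v ^ q * (u ^ p - 1)) ^ j * (v ^ q - 1) ^ (m + l - 1 - j)
            * ((m + l - 1).choose j : A)) := by
        refine mul_dvd_mul ?_ ?_
        · calc u ^ n₁ ∣ u ^ (p * N) := pow_dvd_pow u (h1.trans (Nat.le_mul_of_pos_left N hp))
            _ ∣ (u ^ p * v ^ q) ^ N := by
                rw [mul_pow, ← pow_mul]; exact dvd_mul_right _ _
        · refine dvd_mul_of_dvd_left (dvd_mul_of_dvd_left ?_ _) _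
          rw [mul_pow]
          exact Dvd.dvd.mul_left ((pow_dvd_pow_of_dvd hdu m).trans (pow_dvd_pow _ hjm)) _
      obtain ⟨c, hc⟩ := hdvd
      rw [hc]
      exact Ideal.mul_mem_right _ _ (Ideal.subset_span (by simp))
    · have hjl : l ≤ m + l - 1 - j := by omega
      have hdvd : v ^ n₂ * (v - 1) ^ l ∣
          (u ^ p * v ^ q) ^ N * ((v ^ q * (u ^ p - 1)) ^ j * (v ^ q - 1) ^ (m + l - 1 - j)
            * ((m + l - 1).choose j : A)) := by
        refine mul_dvd_mul ?_ ?_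
        · calc v ^ n₂ ∣ v ^ (q * N) := pow_dvd_pow v (h2.trans (Nat.le_mul_of_pos_left N hq))
            _ ∣ (u ^ p * v ^ q) ^ N := by
                rw [mul_pow, ← pow_mul, ← pow_mul]; exact dvd_mul_left _ _
        · refine dvd_mul_of_dvd_left (Dvd.dvd.mul_left ?_ _) _
          exact (pow_dvd_pow_of_dvd hdv l).trans (pow_dvd_pow _ hjl)
      obtain ⟨c, hc⟩ := hdvd
      rw [hc]
      exact Ideal.mul_mem_right _ _ (Ideal.subset_span (by simp))
  obtain ⟨c, d, hcd⟩ := Ideal.mem_span_pair.mp hmem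
  exact ⟨c, d, hcd.symm⟩

/-- The elementary operator `X ↦ T* X T`. -/
noncomputable def qOp (T : H →L[ℂ] H) : Module.End ℂ (H →L[ℂ] H) :=
  (LinearMap.mulLeft ℂ (ContinuousLinearMap.adjoint T)) * (LinearMap.mulRight ℂ T)

lemma qOp_apply (T X : H →L[ℂ] H) : qOp T X = ContinuousLinearMap.adjoint T * X * T := by
  simp [qOp, Module.End.mul_apply, LinearMap.mulLeft_apply, LinearMap.mulRight_apply, mul_assoc]

lemma qOp_pow_apply (T : H →L[ℂ] H) (n : ℕ) (X : H →L[ℂ] H) :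
    ((qOp T) ^ n) X = (ContinuousLinearMap.adjoint T) ^ n * X * T ^ n := by
  induction n generalizing X with
  | zero => simp
  | succ n ih =>
    rw [pow_succ, Module.End.mul_apply, qOp_apply, ih, pow_succ (ContinuousLinearMap.adjoint T),
      pow_succ' T]
    simp only [mul_assoc]

lemma beta_eq (T : H →L[ℂ] H) (m : ℕ) :
    betaOp T m = ((qOp T - 1) ^ m) (1 : H →L[ℂ] H) := by
  have h : (qOp T - 1 : Module.End ℂ (H →L[ℂ] H)) ^ m
      = ∑ k ∈ Finset.range (m + 1), (qOp T) ^ k * (-1) ^ (m - k) * (m.choose k) := by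
    have := (Commute.neg_one_right (qOp T : Module.End ℂ (H →L[ℂ] H))).add_pow m
    simpa [sub_eq_add_neg] using this
  rw [h, betaOp]
  rw [LinearMap.sum_apply]
  refine Finset.sum_congr rfl fun k hk => ?_
  rw [Module.End.mul_apply, Module.End.mul_apply]
  have h1 : ((m.choose k : Module.End ℂ (H →L[ℂ] H))) (1 : H →L[ℂ] H)
      = (m.choose k : ℂ) • (1 : H →L[ℂ] H) := by
    simp [Module.End.natCast_apply, Nat.cast_smul_eq_nsmul]
  rw [h1]
  have h2 : ((-1 : Module.End ℂ (H →L[ℂ] H)) ^ (m - k)) ((m.choose k : ℂ) • (1 : H →L[ℂ] H))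
      = ((-1 : ℂ) ^ (m - k) * (m.choose k : ℂ)) • (1 : H →L[ℂ] H) := by
    have hne : (-1 : Module.End ℂ (H →L[ℂ] H)) = (-1 : ℂ) • 1 := by
      ext x; simp
    rw [hne, smul_pow, one_pow]
    simp [smul_smul, mul_comm]
  rw [h2, map_smul, qOp_pow_apply]
  simp [mul_assoc]

lemma quasi_iff (T : H →L[ℂ] H) (n m : ℕ) :
    IsNQuasiMIsometry T n m ↔ ((qOp T) ^ n * (qOp T - 1) ^ m) (1 : H →L[ℂ] H) = 0 := by
  rw [IsNQuasiMIsometry, Module.End.mul_apply, ← beta_eq, qOp_pow_apply]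

lemma qOp_comm (T S : H →L[ℂ] H) (hc : T * S = S * T)
    (hstar : ContinuousLinearMap.adjoint T * ContinuousLinearMap.adjoint S
      = ContinuousLinearMap.adjoint S * ContinuousLinearMap.adjoint T) :
    qOp T * qOp S = qOp S * qOp T := by
  ext X
  simp only [Module.End.mul_apply, qOp_apply, mul_assoc]
  rw [hc, ← mul_assoc, ← mul_assoc, hstar]
  simp [mul_assoc]

lemma qOp_prod (T S : H →L[ℂ] H) (p q : ℕ) (hc : T * S = S * T)
    (hstar : ContinuousLinearMap.adjoint T * ContinuousLinearMap.adjoint S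
      = ContinuousLinearMap.adjoint S * ContinuousLinearMap.adjoint T) :
    qOp (T ^ p * S ^ q) = qOp T ^ p * qOp S ^ q := by
  have hcT : Commute T S := hc
  have hcA : Commute (ContinuousLinearMap.adjoint T) (ContinuousLinearMap.adjoint S) := hstar
  ext X
  simp only [Module.End.mul_apply, qOp_apply, qOp_pow_apply]
  have e1 : ContinuousLinearMap.adjoint (T ^ p * S ^ q)
      = (ContinuousLinearMap.adjoint S) ^ q * (ContinuousLinearMap.adjoint T) ^ p := by
    simp [← ContinuousLinearMap.star_eq_adjoint, star_mul, star_pow]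
  rw [e1, (hcT.pow_pow p q).eq, ← (hcA.pow_pow p q).eq]
  simp [mul_assoc]

set_option synthInstance.maxHeartbeats 1000000 in
set_option maxHeartbeats 2000000 in
theorem power_product_doubly_commuting_nQuasiMIsometry (T S : H →L[ℂ] H) (m l n₁ n₂ : ℕ)
    (hm : 1 ≤ m) (hl : 1 ≤ l) (hn₁ : 1 ≤ n₁) (hn₂ : 1 ≤ n₂)
    (hc : T * S = S * T) (hc' : ContinuousLinearMap.adjoint T * S = S * ContinuousLinearMap.adjoint T)
    (hT : IsNQuasiMIsometry T n₁ m) (hS : IsNQuasiMIsometry S n₂ l) :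
    ∀ p q : ℕ, 1 ≤ p → 1 ≤ q →
      IsNQuasiMIsometry (T ^ p * S ^ q) (max n₁ n₂) (m + l - 1) := by
  intro p q hp hq
  have hstar : ContinuousLinearMap.adjoint T * ContinuousLinearMap.adjoint S
      = ContinuousLinearMap.adjoint S * ContinuousLinearMap.adjoint T := by
    have h := congrArg star hc
    simp only [star_mul, ContinuousLinearMap.star_eq_adjoint] at h
    exact h.symm
  have hqc := qOp_comm T S hc hstar
  have hpairs : ∀ a ∈ ({qOp T, qOp S} : Set (Module.End ℂ (H →L[ℂ] H))),
      ∀ b ∈ ({qOp T, qOp S} : Set (Module.End ℂ (H →L[ℂ] H))), a * b = b * a := by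
    intro a ha b hb
    simp only [Set.mem_insert_iff, Set.mem_singleton_iff] at ha hb
    rcases ha with rfl | rfl <;> rcases hb with rfl | rfl <;>
      first | rfl | exact hqc | exact hqc.symm
  letI : CommRing (Algebra.adjoin ℂ ({qOp T, qOp S} : Set (Module.End ℂ (H →L[ℂ] H)))) :=
    Algebra.adjoinCommRingOfComm ℂ hpairs
  obtain ⟨c, d, hcd⟩ := aux_key
    (⟨qOp T, Algebra.subset_adjoin (by simp)⟩ :
      Algebra.adjoin ℂ ({qOp T, qOp S} : Set (Module.End ℂ (H →L[ℂ] H))))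
    (⟨qOp S, Algebra.subset_adjoin (by simp)⟩ :
      Algebra.adjoin ℂ ({qOp T, qOp S} : Set (Module.End ℂ (H →L[ℂ] H))))
    hl hp hq (le_max_left n₁ n₂) (le_max_right n₁ n₂) (m := m)
  have hval := congrArg (Subalgebra.val _) hcd
  simp only [map_add, map_mul, map_pow, map_sub, map_one, Subalgebra.coe_val] at hval
  rw [quasi_iff, qOp_prod T S p q hc hstar, hval]
  have e1 : (qOp T ^ n₁ * (qOp T - 1) ^ m) (1 : H →L[ℂ] H) = 0 := (quasi_iff T n₁ m).mp hT
  have e2 : (qOp S ^ n₂ * (qOp S - 1) ^ l) (1 : H →L[ℂ] H) = 0 := (quasi_iff S n₂ l).mp hS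
  rw [LinearMap.add_apply, Module.End.mul_apply, e1, Module.End.mul_apply, e2, map_zero, map_zero,
    add_zero]
end
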